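/- On the homogeneous tree 𝔗_b (b ≥ 2), there exists c > 0 such that for all sufficiently small α > 0, |{x : 𝒰δ_o(x) > α}| ≥ c (1/α) log(1/α). In particular, the uncentred triangular maximal operator 𝒰 is not of weak type (1,1) on 𝔗_b. -/

import Mathlib

open scoped ENNReal NNReal
open Set

/-- A locally finite tree presented via the data induced by a fixed geodesic ray `ω`:
a predecessor map `pred`, a height (Busemann) function `ht` increasing by one along `pred`,
finite successor sets, and connectedness (any two vertices have a common ancestor). -/
structure TreeData (V : Type*) where
  pred : V → V
  ht : V → ℤ
  ht_pred : ∀ x, ht (pred x) = ht x + 1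
  fiber_finite : ∀ x, {y | pred y = x}.Finite
  connected : ∀ x y, ∃ k l : ℕ, pred^[k] x = pred^[l] y

namespace TreeData

variable {V : Type*}

/-- The set of successors of a vertex. -/
def succs (t : TreeData V) (x : V) : Set V := {y | t.pred y = x}

/-- Every vertex has at least 3 neighbours, i.e. at least 2 successors. -/
def Thick (t : TreeData V) : Prop := ∀ x, 2 ≤ (t.succs x).ncard

/-- Homogeneous tree `𝔗_b`: every vertex has exactly `b+1` neighbours, i.e. `b` successors. -/
def Homog (t : TreeData V) (b : ℕ) : Prop := ∀ x, (t.succs x).ncard = b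

/-- The triangle with vertex `x` and height `R`: all descendants of `x` within `R` generations. -/
def tri (t : TreeData V) (x : V) (R : ℕ) : Set V := {y | ∃ j ≤ R, t.pred^[j] y = x}

/-- The base of the triangle with vertex `x` and height `R`: the `R`-fold successors of `x`. -/
def base (t : TreeData V) (x : V) (R : ℕ) : Set V := {y | t.pred^[R] y = x}

/-- The graph distance on the tree. -/
noncomputable def dist (t : TreeData V) (x y : V) : ℕ :=
  sInf {n | ∃ k l : ℕ, k + l = n ∧ t.pred^[k] x = t.pred^[l] y}

/-- Number of points of a set, as an element of `ℝ≥0∞` (counting measure). -/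
noncomputable def esize (E : Set V) : ℝ≥0∞ := ∑' _ : E, (1 : ℝ≥0∞)

/-- The average of `|f|` over a set, with respect to counting measure. -/
noncomputable def setAvg (t : TreeData V) (S : Set V) (f : V → ℝ) : ℝ≥0∞ :=
  (∑' y : S, (‖f y‖₊ : ℝ≥0∞)) / (S.ncard : ℝ≥0∞)

/-- The centred triangular maximal operator `𝒯`. -/
noncomputable def cmax (t : TreeData V) (f : V → ℝ) (x : V) : ℝ≥0∞ :=
  ⨆ R : ℕ, t.setAvg (t.tri x R) f

/-- The uncentred triangular maximal operator `𝒰`. -/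
noncomputable def umax (t : TreeData V) (f : V → ℝ) (x : V) : ℝ≥0∞ :=
  ⨆ (v : V) (R : ℕ) (_ : x ∈ t.tri v R), t.setAvg (t.tri v R) f

/-- The uncentred base maximal operator `ℬᵘ`. -/
noncomputable def ubmax (t : TreeData V) (f : V → ℝ) (x : V) : ℝ≥0∞ :=
  ⨆ (v : V) (R : ℕ) (_ : x ∈ t.tri v R), t.setAvg (t.base v R) f

/-- The modified triangle `T'_r(x) = T_r(x) ∪ {p^r(x)}`. -/
def mtri (t : TreeData V) (x : V) (r : ℕ) : Set V := t.tri x r ∪ {t.pred^[r] x}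

/-- The modified centred triangular maximal operator `𝒯'`. -/
noncomputable def cmax' (t : TreeData V) (f : V → ℝ) (x : V) : ℝ≥0∞ :=
  ⨆ r : ℕ, t.setAvg (t.mtri x r) f

/-- The modified uncentred triangular maximal operator `𝒰'`. -/
noncomputable def umax' (t : TreeData V) (f : V → ℝ) (x : V) : ℝ≥0∞ :=
  ⨆ (v : V) (r : ℕ) (_ : x ∈ t.mtri v r), t.setAvg (t.mtri v r) f

/-- The `ℓ^p` norm with respect to counting measure, for `p ∈ [1,∞]`. -/
noncomputable def eLp (p : ℝ≥0∞) (g : V → ℝ≥0∞) : ℝ≥0∞ :=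
  if p = ∞ then ⨆ v, g v else (∑' v, g v ^ p.toReal) ^ (1 / p.toReal)

/-- `|f|` as an `ℝ≥0∞`-valued function. -/
noncomputable def nn (f : V → ℝ) (x : V) : ℝ≥0∞ := (‖f x‖₊ : ℝ≥0∞)

/-- The point mass at `o`. -/
noncomputable def delta (o : V) : V → ℝ := ({o} : Set V).indicator fun _ => 1

end TreeData

namespace TreeData

variable {V : Type*}

-- helper lemmas

lemma esize_eq_tsum_indicator (E : Set V) :
    esize E = ∑' x, E.indicator (fun _ => (1 : ℝ≥0∞)) x := by
  rw [esize]; exact tsum_subtype E fun _ => (1 : ℝ≥0∞)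

lemma esize_mono {E F : Set V} (h : E ⊆ F) : esize E ≤ esize F := by
  rw [esize_eq_tsum_indicator, esize_eq_tsum_indicator]
  exact ENNReal.tsum_le_tsum fun x =>
    Set.indicator_le_indicator_of_subset h (fun _ => zero_le') x

lemma esize_eq_ncard (E : Set V) (hE : E.Finite) : esize E = E.ncard := by
  haveI := hE.fintype
  rw [esize, tsum_fintype]
  rw [Finset.sum_const, Finset.card_univ, nsmul_eq_mul, mul_one, ← Nat.card_coe_set_eq,
    Nat.card_eq_fintype_card]

lemma sum_esize_le_esize_biUnion (s : Finset ℕ) (B : ℕ → Set V)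
    (hd : ∀ i ∈ s, ∀ j ∈ s, i ≠ j → Disjoint (B i) (B j)) :
    ∑ j ∈ s, esize (B j) ≤ esize (⋃ j ∈ s, B j) := by
  have h1 : ∑ j ∈ s, esize (B j)
      = ∑' x, ∑ j ∈ s, (B j).indicator (fun _ => (1 : ℝ≥0∞)) x := by
    rw [Summable.tsum_finsetSum (fun i _ => ENNReal.summable)]
    exact Finset.sum_congr rfl fun j _ => esize_eq_tsum_indicator (B j)
  rw [h1, esize_eq_tsum_indicator]
  refine ENNReal.tsum_le_tsum fun x => ?_
  by_cases hx : ∃ j ∈ s, x ∈ B j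
  · obtain ⟨j₀, hj₀, hxj₀⟩ := hx
    rw [Finset.sum_eq_single_of_mem j₀ hj₀ (fun j hj hne => by
      rw [Set.indicator_of_notMem]
      exact fun hxj => (hd j hj j₀ hj₀ hne).ne_of_mem hxj hxj₀ rfl)]
    have hxU : x ∈ ⋃ j ∈ s, B j := by exact Set.mem_biUnion hj₀ hxj₀
    rw [Set.indicator_of_mem hxj₀, Set.indicator_of_mem hxU]
  · push_neg at hx
    rw [Finset.sum_eq_zero fun j hj => Set.indicator_of_notMem (hx j hj) _]
    exact zero_le'

variable (t : TreeData V)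

lemma ht_iterate (y : V) (j : ℕ) : t.ht (t.pred^[j] y) = t.ht y + j := by
  induction j with
  | zero => simp
  | succ n ih => rw [Function.iterate_succ_apply', t.ht_pred, ih]; push_cast; ring

lemma mem_base_ht {x y : V} {j : ℕ} (h : y ∈ t.base x j) : t.ht y + j = t.ht x := by
  have := t.ht_iterate y j
  rw [show t.pred^[j] y = x from h] at this
  omega

lemma base_zero (x : V) : t.base x 0 = {x} := by
  ext y; simp [base]

lemma base_succ (x : V) (R : ℕ) :
    t.base x (R + 1) = {y | t.pred y ∈ t.base x R} := by
  ext y; simp [base, Function.iterate_succ_apply]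

lemma base_finite_card {b : ℕ} (hhom : t.Homog b) (x : V) (R : ℕ) :
    (t.base x R).Finite ∧ (t.base x R).ncard = b ^ R := by
  induction R with
  | zero => simp [t.base_zero]
  | succ R ih =>
    obtain ⟨hfin, hcard⟩ := ih
    classical
    set F : Finset V := hfin.toFinset with hF
    have hG : ∀ z : V, (t.succs z).Finite := fun z => t.fiber_finite z
    set G : V → Finset V := fun z => (hG z).toFinset with hGdef
    have hset : t.base x (R + 1) = ↑(F.biUnion G) := by
      ext y
      simp only [t.base_succ, Set.mem_setOf_eq, Finset.coe_biUnion, Set.mem_iUnion,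
        Finset.mem_coe, Finset.mem_biUnion]
      constructor
      · intro h
        exact ⟨t.pred y, by simpa [hF] using h, by simp [hGdef, succs]⟩
      · rintro ⟨z, hz, hy⟩
        have : t.pred y = z := by simpa [hGdef, succs] using hy
        rw [this]; simpa [hF] using hz
    have hdisj : ∀ z₁ ∈ F, ∀ z₂ ∈ F, z₁ ≠ z₂ → Disjoint (G z₁) (G z₂) := by
      intro z₁ _ z₂ _ hne
      refine Finset.disjoint_left.2 fun y hy₁ hy₂ => hne ?_
      have h1 : t.pred y = z₁ := by simpa [hGdef, succs] using hy₁
      have h2 : t.pred y = z₂ := by simpa [hGdef, succs] using hy₂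
      rw [← h1, h2]
    have hcardG : ∀ z, (G z).card = b := by
      intro z
      have := hhom z
      rwa [Set.ncard_eq_toFinset_card _ (hG z)] at this
    constructor
    · rw [hset]; exact (F.biUnion G).finite_toSet
    · rw [hset, Set.ncard_coe_finset, Finset.card_biUnion hdisj]
      simp only [hcardG, Finset.sum_const, smul_eq_mul]
      rw [hF, ← Set.ncard_eq_toFinset_card _ hfin, hcard]
      ring

lemma tri_eq_biUnion (x : V) (R : ℕ) :
    t.tri x R = ⋃ j ∈ Finset.range (R + 1), t.base x j := by
  ext y
  simp only [tri, base, Set.mem_setOf_eq, Set.mem_iUnion, Finset.mem_range]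
  constructor
  · rintro ⟨j, hj, h⟩; exact ⟨j, by omega, h⟩
  · rintro ⟨j, hj, h⟩; exact ⟨j, by omega, h⟩

lemma tri_finite {b : ℕ} (hhom : t.Homog b) (x : V) (R : ℕ) : (t.tri x R).Finite := by
  rw [t.tri_eq_biUnion]
  exact Set.Finite.biUnion (Finset.range (R + 1)).finite_toSet
    fun j _ => (t.base_finite_card hhom x j).1

lemma mem_tri_self (x : V) (R : ℕ) : x ∈ t.tri x R := ⟨0, by omega, rfl⟩

lemma base_subset_tri (x : V) (R : ℕ) : t.base x R ⊆ t.tri x R :=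
  fun y hy => ⟨R, le_rfl, hy⟩

lemma tri_ncard_lt {b : ℕ} (hb : 2 ≤ b) (hhom : t.Homog b) (x : V) (R : ℕ) :
    (t.tri x R).ncard < b ^ (R + 1) := by
  classical
  have hfin : ∀ j, (t.base x j).Finite := fun j => (t.base_finite_card hhom x j).1
  have hsub : t.tri x R ⊆ ⋃ j ∈ Finset.range (R + 1), t.base x j :=
    (t.tri_eq_biUnion x R).le
  have h1 : (t.tri x R).ncard ≤ ∑ j ∈ Finset.range (R + 1), (t.base x j).ncard := by
    calc (t.tri x R).ncard
        ≤ (⋃ j ∈ Finset.range (R + 1), t.base x j).ncard := by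
          refine Set.ncard_le_ncard hsub ?_
          exact Set.Finite.biUnion (Finset.range (R + 1)).finite_toSet fun j _ => hfin j
      _ ≤ ∑ j ∈ Finset.range (R + 1), (t.base x j).ncard := by
          induction R + 1 with
          | zero => simp
          | succ n ih =>
            rw [Finset.range_add_one, Finset.sum_insert (by simp)]
            calc (⋃ j ∈ insert n (Finset.range n), t.base x j).ncard
                = (t.base x n ∪ ⋃ j ∈ Finset.range n, t.base x j).ncard := by
                  congr 1; simp [Set.biUnion_insert]
              _ ≤ (t.base x n).ncard + (⋃ j ∈ Finset.range n, t.base x j).ncard :=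
                  Set.ncard_union_le _ _
              _ ≤ _ := by exact Nat.add_le_add_left ih _
  calc (t.tri x R).ncard ≤ ∑ j ∈ Finset.range (R + 1), (t.base x j).ncard := h1
    _ = ∑ j ∈ Finset.range (R + 1), b ^ j := by
        exact Finset.sum_congr rfl fun j _ => (t.base_finite_card hhom x j).2
    _ < b ^ (R + 1) := Nat.geomSum_lt hb (fun k hk => Finset.mem_range.1 hk)

lemma nn_delta (o : V) :
    nn (delta o) = ({o} : Set V).indicator (fun _ => (1 : ℝ≥0∞)) := by
  funext y
  by_cases h : y = o <;> simp [nn, delta, Set.indicator, h]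

lemma tsum_nn_delta (o : V) : ∑' x, nn (delta o) x = 1 := by
  rw [nn_delta, tsum_eq_single o (fun y hy => Set.indicator_of_notMem (by simp [hy]) _)]
  simp

lemma avg_delta (o : V) (S : Set V) (hoS : o ∈ S) :
    t.setAvg S (delta o) = 1 / (S.ncard : ℝ≥0∞) := by
  have h : ∑' y : S, ((‖delta o y‖₊ : ℝ≥0∞)) = 1 := by
    have h1 : ∀ y : V, ((‖delta o y‖₊ : ℝ≥0∞)) = nn (delta o) y := fun y => rfl
    calc ∑' y : S, ((‖delta o y‖₊ : ℝ≥0∞)) = ∑' y, S.indicator (fun z => nn (delta o) z) y :=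
          tsum_subtype S fun z => nn (delta o) z
      _ = ∑' y, ({o} : Set V).indicator (fun _ => (1 : ℝ≥0∞)) y := by
          refine tsum_congr fun y => ?_
          by_cases hy : y = o
          · subst hy; rw [Set.indicator_of_mem hoS, nn_delta]
          · by_cases hyS : y ∈ S
            · rw [Set.indicator_of_mem hyS, nn_delta]
            · rw [Set.indicator_of_notMem hyS, Set.indicator_of_notMem (by simp [hy])]
      _ = 1 := by
          rw [tsum_eq_single o (fun y hy => Set.indicator_of_notMem (by simp [hy]) _)]
          simp
  rw [setAvg, h]

lemma le_umax (f : V → ℝ) {x v : V} {R : ℕ} (hx : x ∈ t.tri v R) :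
    t.setAvg (t.tri v R) f ≤ t.umax f x :=
  le_iSup_of_le v (le_iSup_of_le R (le_iSup_of_le hx le_rfl))

lemma level_set_lower {b : ℕ} (hb : 2 ≤ b) (hhom : t.Homog b) (o : V) (R : ℕ) (α : ℝ)
    (hα : 0 < α) (hsmall : α * (b : ℝ) ^ (R + 1) ≤ 1) :
    (((R + 1) * b ^ R : ℕ) : ℝ≥0∞) ≤
      esize {x | ENNReal.ofReal α < t.umax (delta o) x} := by
  classical
  set A := {x | ENNReal.ofReal α < t.umax (delta o) x} with hA
  set B : ℕ → Set V := fun j => t.base (t.pred^[j] o) R with hBdef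
  have hBsub : ∀ j ∈ Finset.range (R + 1), B j ⊆ A := by
    intro j hj x hx
    have hjR : j ≤ R := by simpa [Nat.lt_succ_iff] using hj
    set v := t.pred^[j] o with hv
    have hxtri : x ∈ t.tri v R := t.base_subset_tri v R hx
    have hotri : o ∈ t.tri v R := ⟨j, hjR, rfl⟩
    have hfin : (t.tri v R).Finite := t.tri_finite hhom v R
    set n := (t.tri v R).ncard with hn
    have hn1 : 1 ≤ n := (Set.ncard_pos hfin).2 ⟨x, hxtri⟩
    have hn0 : (0 : ℝ) < n := by exact_mod_cast hn1
    have hnlt : (n : ℝ) < (b : ℝ) ^ (R + 1) := by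
      exact_mod_cast t.tri_ncard_lt hb hhom v R
    have hαn : α < ((n : ℝ))⁻¹ := by
      rw [← one_div, lt_div_iff₀ hn0]
      nlinarith
    have key : ENNReal.ofReal α < ((n : ℕ) : ℝ≥0∞)⁻¹ := by
      calc ENNReal.ofReal α < ENNReal.ofReal (((n : ℝ))⁻¹) :=
            (ENNReal.ofReal_lt_ofReal_iff (by positivity)).2 hαn
        _ = (ENNReal.ofReal ((n : ℝ)))⁻¹ := ENNReal.ofReal_inv_of_pos hn0
        _ = ((n : ℕ) : ℝ≥0∞)⁻¹ := by rw [ENNReal.ofReal_natCast]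
    show ENNReal.ofReal α < t.umax (delta o) x
    refine lt_of_lt_of_le ?_ (t.le_umax (delta o) hxtri)
    rw [t.avg_delta o _ hotri, one_div, ← hn]
    exact key
  have hdisj : ∀ i ∈ Finset.range (R + 1), ∀ j ∈ Finset.range (R + 1), i ≠ j →
      Disjoint (B i) (B j) := by
    intro i _ j _ hne
    refine Set.disjoint_left.2 fun y hyi hyj => hne ?_
    have h1 : t.ht y + R = t.ht (t.pred^[i] o) := t.mem_base_ht hyi
    have h2 : t.ht y + R = t.ht (t.pred^[j] o) := t.mem_base_ht hyj
    have h3 := t.ht_iterate o i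
    have h4 := t.ht_iterate o j
    omega
  calc (((R + 1) * b ^ R : ℕ) : ℝ≥0∞)
      = ∑ j ∈ Finset.range (R + 1), esize (B j) := by
        have : ∀ j ∈ Finset.range (R + 1), esize (B j) = ((b ^ R : ℕ) : ℝ≥0∞) := by
          intro j _
          rw [esize_eq_ncard _ (t.base_finite_card hhom _ R).1,
            (t.base_finite_card hhom _ R).2]
        rw [Finset.sum_congr rfl this]
        simp [mul_comm]
    _ ≤ esize (⋃ j ∈ Finset.range (R + 1), B j) :=
        sum_esize_le_esize_biUnion _ _ hdisj
    _ ≤ esize A := esize_mono (Set.iUnion₂_subset hBsub)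

end TreeData



/-- On `𝔗_b`, there is `c > 0` with
`|{𝒰δ_o > α}| ≥ c (1/α) log(1/α)` for all sufficiently small `α > 0`; in particular
`𝒰` is not of weak type `(1,1)`. -/
theorem stmt14 {V : Type*} (t : TreeData V) (b : ℕ) (hb : 2 ≤ b) (hhom : t.Homog b)
    (o : V) :
    (∃ c : ℝ, 0 < c ∧ ∃ α₀ : ℝ, 0 < α₀ ∧ ∀ α : ℝ, 0 < α → α < α₀ →
        ENNReal.ofReal (c * (1 / α) * Real.log (1 / α)) ≤
          TreeData.esize {x | ENNReal.ofReal α < t.umax (TreeData.delta o) x}) ∧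
      ¬ ∃ C : ℝ≥0∞, C < ∞ ∧ ∀ (f : V → ℝ) (α : ℝ≥0∞), 0 < α →
          TreeData.esize {x | α < t.umax f x} ≤ C * (∑' x, TreeData.nn f x) / α := by
  classical
  have hB1 : (1 : ℝ) < b := by exact_mod_cast (by omega : 1 < b)
  have hlogB : 0 < Real.log b := Real.log_pos hB1
  set c : ℝ := 1 / (2 * (b : ℝ) ^ 2 * Real.log b) with hc
  have hcpos : 0 < c := one_div_pos.2 (mul_pos (by positivity) hlogB)
  set α₀ : ℝ := ((b : ℝ) ^ 2)⁻¹ with hα₀def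
  have hα₀pos : 0 < α₀ := by positivity
  have hpart1 : ∀ α : ℝ, 0 < α → α < α₀ →
      ENNReal.ofReal (c * (1 / α) * Real.log (1 / α)) ≤
        TreeData.esize {x | ENNReal.ofReal α < t.umax (TreeData.delta o) x} := by
    intro α hα hαlt
    have h1α0 : (0 : ℝ) < 1 / α := by positivity
    have hb2α : (b : ℝ) ^ 2 < 1 / α := by
      rw [lt_div_iff₀ hα]
      have h := mul_lt_mul_of_pos_left hαlt (show (0 : ℝ) < (b : ℝ) ^ 2 by positivity)
      calc (b : ℝ) ^ 2 * α < (b : ℝ) ^ 2 * α₀ := h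
        _ = 1 := by rw [hα₀def]; field_simp
    set N := Nat.floor (1 / α) with hN
    have hNb2 : b ^ 2 ≤ N := Nat.le_floor (by push_cast; linarith)
    have hNb : b ≤ N := le_trans (Nat.le_self_pow (by omega) b) hNb2
    have hN0 : N ≠ 0 := by omega
    set L := Nat.log b N with hL
    have hL1 : 1 ≤ L := Nat.log_pos (by omega) hNb
    set R := L - 1 with hR
    have hRL : R + 1 = L := by omega
    have hpowle : b ^ (R + 1) ≤ N := by rw [hRL, hL]; exact Nat.pow_log_le_self b hN0
    have hpowgt : N < b ^ (R + 2) := by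
      have h := Nat.lt_pow_succ_log_self (show 1 < b by omega) N
      rwa [show (Nat.log b N).succ = R + 2 by omega] at h
    have hup : (b : ℝ) ^ (R + 1) ≤ 1 / α := by
      refine le_trans ?_ (Nat.floor_le h1α0.le)
      exact_mod_cast Nat.cast_le.2 hpowle
    have hlow : 1 / α < (b : ℝ) ^ (R + 2) := by
      have h2 : (1 : ℝ) / α < N + 1 := Nat.lt_floor_add_one _
      have h3 : ((N : ℝ) + 1) ≤ (b : ℝ) ^ (R + 2) := by
        exact_mod_cast Nat.succ_le_of_lt hpowgt
      linarith
    have hsmall : α * (b : ℝ) ^ (R + 1) ≤ 1 := by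
      have h := mul_le_mul_of_nonneg_left hup hα.le
      rwa [mul_one_div, div_self hα.ne'] at h
    have hloggt : 2 * Real.log b < Real.log (1 / α) := by
      have h := Real.log_lt_log (by positivity) hb2α
      rw [Real.log_pow] at h
      push_cast at h
      linarith
    have hlogpos : 0 < Real.log (1 / α) := by linarith
    have hR2 : Real.log (1 / α) < ((R : ℝ) + 2) * Real.log b := by
      have h := Real.log_lt_log h1α0 hlow
      rw [Real.log_pow] at h
      push_cast at h
      linarith
    have hRnn : (0 : ℝ) ≤ (R : ℝ) := Nat.cast_nonneg R
    have key1 : Real.log (1 / α) ≤ ((R : ℝ) + 1) * (2 * Real.log (b : ℝ)) := by nlinarith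
    have key2 : 1 / α ≤ (b : ℝ) ^ R * (b : ℝ) ^ 2 := by
      have h : (b : ℝ) ^ (R + 2) = (b : ℝ) ^ R * (b : ℝ) ^ 2 := by ring
      linarith
    have hfinal : c * (1 / α) * Real.log (1 / α) ≤ ((R : ℝ) + 1) * (b : ℝ) ^ R := by
      have hmul : (1 / α) * Real.log (1 / α)
          ≤ ((b : ℝ) ^ R * (b : ℝ) ^ 2) * (((R : ℝ) + 1) * (2 * Real.log (b : ℝ))) :=
        mul_le_mul key2 key1 hlogpos.le (by positivity)
      have hcmul : c * (2 * (b : ℝ) ^ 2 * Real.log (b : ℝ)) = 1 := by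
        rw [hc]
        exact one_div_mul_cancel (ne_of_gt (mul_pos (by positivity) hlogB))
      calc c * (1 / α) * Real.log (1 / α) = c * ((1 / α) * Real.log (1 / α)) := by ring
        _ ≤ c * (((b : ℝ) ^ R * (b : ℝ) ^ 2) * (((R : ℝ) + 1) * (2 * Real.log (b : ℝ)))) :=
            mul_le_mul_of_nonneg_left hmul hcpos.le
        _ = ((R : ℝ) + 1) * (b : ℝ) ^ R * (c * (2 * (b : ℝ) ^ 2 * Real.log (b : ℝ))) := by
            ring
        _ = ((R : ℝ) + 1) * (b : ℝ) ^ R := by rw [hcmul, mul_one]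
    calc ENNReal.ofReal (c * (1 / α) * Real.log (1 / α))
        ≤ ENNReal.ofReal (((R : ℝ) + 1) * (b : ℝ) ^ R) := ENNReal.ofReal_le_ofReal hfinal
      _ = (((R + 1) * b ^ R : ℕ) : ℝ≥0∞) := by
          rw [show ((R : ℝ) + 1) * (b : ℝ) ^ R = (((R + 1) * b ^ R : ℕ) : ℝ) by
            push_cast; ring, ENNReal.ofReal_natCast]
      _ ≤ _ := t.level_set_lower hb hhom o R α hα hsmall
  refine ⟨⟨c, hcpos, α₀, hα₀pos, hpart1⟩, ?_⟩
  rintro ⟨C, hC, hweak⟩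
  set α : ℝ := min (α₀ / 2) (Real.exp (-((C.toReal + 1) / c))) with hαdef
  have hαpos : 0 < α := lt_min (by linarith) (Real.exp_pos _)
  have hαlt : α < α₀ := lt_of_le_of_lt (min_le_left _ _) (by linarith)
  have h1α0 : (0 : ℝ) < 1 / α := by positivity
  have hα1 : α < 1 := by
    have hB2 : (2 : ℝ) ≤ (b : ℝ) := by exact_mod_cast hb
    have hb4 : (4 : ℝ) ≤ (b : ℝ) ^ 2 := by nlinarith
    have hinv : α₀ ≤ (4 : ℝ)⁻¹ := by
      rw [hα₀def]
      exact inv_anti₀ (by norm_num) hb4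
    have : (4 : ℝ)⁻¹ < 1 := by norm_num
    linarith
  have hlogpos : 0 < Real.log (1 / α) := Real.log_pos (by rw [lt_div_iff₀ hαpos]; linarith)
  have h1 := hpart1 α hαpos hαlt
  have h2 := hweak (TreeData.delta o) (ENNReal.ofReal α) (ENNReal.ofReal_pos.2 hαpos)
  rw [TreeData.tsum_nn_delta, mul_one] at h2
  have hX0 : ENNReal.ofReal (1 / α) ≠ 0 := (ENNReal.ofReal_pos.2 h1α0).ne'
  have hXtop : ENNReal.ofReal (1 / α) ≠ ∞ := ENNReal.ofReal_ne_top
  have hdiv : C / ENNReal.ofReal α = C * ENNReal.ofReal (1 / α) := by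
    rw [one_div, ENNReal.ofReal_inv_of_pos hαpos, div_eq_mul_inv]
  have hsplit : ENNReal.ofReal (c * (1 / α) * Real.log (1 / α))
      = ENNReal.ofReal (c * Real.log (1 / α)) * ENNReal.ofReal (1 / α) := by
    rw [← ENNReal.ofReal_mul (by positivity : (0 : ℝ) ≤ c * Real.log (1 / α))]
    ring_nf
  have hle : ENNReal.ofReal (c * Real.log (1 / α)) ≤ C := by
    have h3 : ENNReal.ofReal (c * Real.log (1 / α)) * ENNReal.ofReal (1 / α)
        ≤ C * ENNReal.ofReal (1 / α) := by
      rw [← hsplit, ← hdiv]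
      exact le_trans h1 h2
    exact (ENNReal.mul_le_mul_iff_left hX0 hXtop).1 h3
  have hlog2 : C.toReal + 1 ≤ c * Real.log (1 / α) := by
    have hαexp : α ≤ Real.exp (-((C.toReal + 1) / c)) := min_le_right _ _
    have hlogα : Real.log α ≤ -((C.toReal + 1) / c) :=
      (Real.log_le_iff_le_exp hαpos).2 hαexp
    have hloginv : (C.toReal + 1) / c ≤ Real.log (1 / α) := by
      rw [one_div, Real.log_inv]; linarith
    have := mul_le_mul_of_nonneg_left hloginv hcpos.le
    rw [mul_div_cancel₀ _ hcpos.ne'] at this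
    linarith
  have hfin : ENNReal.ofReal (C.toReal + 1) ≤ ENNReal.ofReal C.toReal := by
    calc ENNReal.ofReal (C.toReal + 1) ≤ ENNReal.ofReal (c * Real.log (1 / α)) :=
          ENNReal.ofReal_le_ofReal hlog2
      _ ≤ C := hle
      _ = ENNReal.ofReal C.toReal := (ENNReal.ofReal_toReal hC.ne).symm
  have := (ENNReal.ofReal_le_ofReal_iff ENNReal.toReal_nonneg).1 hfin
  linarith
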